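/- Let Ω ⊆ ℂ and let r : Ω → A⊗A satisfy r^{12}(v)·r^{13}(v+v') − r^{23}(v')·r^{12}(v) + r^{13}(v+v')·r^{23}(v') = 0 for all v, v' ∈ Ω with v+v' ∈ Ω, and r^{21}(−v) = −r(v) whenever v, −v ∈ Ω. Define r̂(u,v) = u^{-1}·(1⊗1) + r(v) for u ∈ ℂ ∖ {0} and v ∈ Ω. Then r̂ is a unitary solution of the associative Yang–Baxter equation: r̂^{12}(−u',v)·r̂^{13}(u+u',v+v') − r̂^{23}(u+u',v')·r̂^{12}(u,v) + r̂^{13}(u,v+v')·r̂^{23}(u',v') = 0 for all u, u' ∈ ℂ with u, u', u+u' ≠ 0 and all v, v' ∈ Ω with v+v' ∈ Ω, and r̂^{21}(−u,−v) = −r̂(u,v) for all u ≠ 0 and v ∈ Ω with −v ∈ Ω. -/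

import Mathlib

open scoped TensorProduct
set_option maxHeartbeats 1000000
noncomputable section

/-- The algebra of `S × S` complex matrices. -/
abbrev Mat (S : Type) := Matrix S S ℂ
/-- `A ⊗ A`. -/
abbrev TT (S : Type) := Mat S ⊗[ℂ] Mat S
/-- `A ⊗ A ⊗ A`. -/
abbrev TTT (S : Type) := Mat S ⊗[ℂ] (Mat S ⊗[ℂ] Mat S)

variable (S : Type) [Fintype S] [DecidableEq S]

/-- Matrix units `e_{ij}`. -/
def E (i j : S) : Mat S := Matrix.single i j 1

/-- `x^{12}`: `a ⊗ b ↦ a ⊗ b ⊗ 1`. -/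
def leg12 : TT S →ₐ[ℂ] TTT S :=
  Algebra.TensorProduct.map (AlgHom.id ℂ (Mat S))
    (Algebra.TensorProduct.includeLeft (R := ℂ) (A := Mat S) (B := Mat S))

/-- `x^{13}`: `a ⊗ b ↦ a ⊗ 1 ⊗ b`. -/
def leg13 : TT S →ₐ[ℂ] TTT S :=
  Algebra.TensorProduct.map (AlgHom.id ℂ (Mat S))
    (Algebra.TensorProduct.includeRight (R := ℂ) (A := Mat S) (B := Mat S))

/-- `x^{23}`: `a ⊗ b ↦ 1 ⊗ a ⊗ b`. -/
def leg23 : TT S →ₐ[ℂ] TTT S :=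
  Algebra.TensorProduct.includeRight (R := ℂ) (A := Mat S) (B := TT S)

/-- `x^{21}`: `a ⊗ b ↦ b ⊗ a`. -/
def flip21 : TT S →ₐ[ℂ] TT S :=
  (Algebra.TensorProduct.comm ℂ (Mat S) (Mat S)).toAlgHom


set_option synthInstance.maxHeartbeats 1000000

lemma aux_expand {B : Type*} [Ring B] [Algebra ℂ B]
    (a b d f : ℂ) (X12 X13 X23 : B)
    (key : X12 * X13 - X23 * X12 + X13 * X23 = 0)
    (h1 : a * b - b * d + d * f = 0) (h3 : a + f = 0) :
    (a • 1 + X12) * (b • 1 + X13) - (b • 1 + X23) * (d • 1 + X12)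
      + (d • 1 + X13) * (f • 1 + X23) = 0 := by
  have hA : X13 * X23 = X23 * X12 - X12 * X13 := by
    rw [← sub_eq_zero, ← key]; abel
  simp only [add_mul, mul_add, smul_mul_assoc, mul_smul_comm, one_mul, mul_one, smul_smul]
  rw [hA]
  match_scalars
  all_goals first
    | linear_combination h1
    | linear_combination h3
    | ring

/-- if `r(v)` is a unitary solution of the `u`-independent AYBE on `Ω`,
then `r̂(u,v) = u⁻¹·(1⊗1) + r(v)` is a unitary solution of the AYBE. -/
theorem stmt18 (N : ℕ) (Ω : Set ℂ)
    (r : ℂ → TT (Fin N))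
    (hAYBE : ∀ v ∈ Ω, ∀ v' ∈ Ω, v + v' ∈ Ω →
      leg12 (Fin N) (r v) * leg13 (Fin N) (r (v + v'))
        - leg23 (Fin N) (r v') * leg12 (Fin N) (r v)
        + leg13 (Fin N) (r (v + v')) * leg23 (Fin N) (r v') = 0)
    (hunit : ∀ v ∈ Ω, -v ∈ Ω → flip21 (Fin N) (r (-v)) = - r v)
    (rhat : ℂ → ℂ → TT (Fin N))
    (hrhat : ∀ u v : ℂ, rhat u v = u⁻¹ • (1 : TT (Fin N)) + r v) :
    (∀ u u' : ℂ, u ≠ 0 → u' ≠ 0 → u + u' ≠ 0 →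
      ∀ v ∈ Ω, ∀ v' ∈ Ω, v + v' ∈ Ω →
      leg12 (Fin N) (rhat (-u') v) * leg13 (Fin N) (rhat (u + u') (v + v'))
        - leg23 (Fin N) (rhat (u + u') v') * leg12 (Fin N) (rhat u v)
        + leg13 (Fin N) (rhat u (v + v')) * leg23 (Fin N) (rhat u' v') = 0)
    ∧ (∀ u : ℂ, u ≠ 0 → ∀ v ∈ Ω, -v ∈ Ω →
        flip21 (Fin N) (rhat (-u) (-v)) = - rhat u v) := by
  constructor
  · intro u u' hu hu' huu' v hv v' hv' hvv'
    have key := hAYBE v hv v' hv' hvv'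
    have e12 : leg12 (Fin N) (rhat (-u') v)
        = (-u')⁻¹ • (1 : TTT (Fin N)) + leg12 (Fin N) (r v) := by
      rw [hrhat, map_add, map_smul, show (leg12 (Fin N)) 1 = 1 from (leg12 (Fin N)).map_one']
    have e12' : leg12 (Fin N) (rhat u v)
        = u⁻¹ • (1 : TTT (Fin N)) + leg12 (Fin N) (r v) := by
      rw [hrhat, map_add, map_smul, show (leg12 (Fin N)) 1 = 1 from (leg12 (Fin N)).map_one']
    have e13 : leg13 (Fin N) (rhat (u + u') (v + v'))
        = (u + u')⁻¹ • (1 : TTT (Fin N)) + leg13 (Fin N) (r (v + v')) := by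
      rw [hrhat, map_add, map_smul, show (leg13 (Fin N)) 1 = 1 from (leg13 (Fin N)).map_one']
    have e13' : leg13 (Fin N) (rhat u (v + v'))
        = u⁻¹ • (1 : TTT (Fin N)) + leg13 (Fin N) (r (v + v')) := by
      rw [hrhat, map_add, map_smul, show (leg13 (Fin N)) 1 = 1 from (leg13 (Fin N)).map_one']
    have e23 : leg23 (Fin N) (rhat (u + u') v')
        = (u + u')⁻¹ • (1 : TTT (Fin N)) + leg23 (Fin N) (r v') := by
      rw [hrhat, map_add, map_smul, show (leg23 (Fin N)) 1 = 1 from (leg23 (Fin N)).map_one']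
    have e23' : leg23 (Fin N) (rhat u' v')
        = u'⁻¹ • (1 : TTT (Fin N)) + leg23 (Fin N) (r v') := by
      rw [hrhat, map_add, map_smul, show (leg23 (Fin N)) 1 = 1 from (leg23 (Fin N)).map_one']
    rw [e12, e12', e13, e13', e23, e23']
    refine aux_expand (B := TTT (Fin N)) _ _ _ _ _ _ _ key ?_ ?_
    · field_simp
      ring
    · field_simp
      ring
  · intro u hu v hv hv'
    simp only [hrhat, map_add, map_smul, map_one, hunit v hv hv', inv_neg, neg_smul, neg_add]
    module
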